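/- Let m ≥ 2 be an integer, c ≠ 0 a real number, and F(x,y) = c · Re((x + iy)^m) for (x,y) ∈ ℝ². Then the Gaussian curvature of the graph surface (x, y, F(x,y)) satisfies, at every point, K = (F_xx F_yy − F_xy²)/(1 + F_x² + F_y²)² = − c² m² (m−1)² (x² + y²)^{m−2} / ( 1 + c² m² (x² + y²)^{m−1} )². In particular K depends only on x² + y², so the contours of K project to concentric circles centered at the origin of the xy-plane. -/

import Mathlib

noncomputable section

open Complex in
private lemma stmt6_Lx (a : ℂ) (n : ℕ) (y x : ℝ) :
    HasDerivAt (fun s : ℝ => (a * ((s:ℂ) + (y:ℂ) * I) ^ n).re)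
      ((a * ((n:ℂ) * ((x:ℂ) + (y:ℂ) * I) ^ (n-1))).re) x := by
  have h0 : HasDerivAt (fun s : ℝ => (s:ℂ) + (y:ℂ) * I) 1 x := by
    simpa using (Complex.ofRealCLM.hasDerivAt (x := x)).add_const ((y:ℂ)*I)
  have h1 := (((hasDerivAt_pow n _).comp x h0).const_mul a)
  have h2 := (Complex.reCLM.hasFDerivAt.comp_hasDerivAt x h1)
  simpa [Function.comp_def, Complex.reCLM_apply, mul_comm, mul_assoc, mul_left_comm] using h2

open Complex in
private lemma stmt6_Ly (a : ℂ) (n : ℕ) (x y : ℝ) :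
    HasDerivAt (fun t : ℝ => (a * ((x:ℂ) + (t:ℂ) * I) ^ n).re)
      ((a * ((n:ℂ) * ((x:ℂ) + (y:ℂ) * I) ^ (n-1)) * I).re) y := by
  have h0 : HasDerivAt (fun t : ℝ => (x:ℂ) + (t:ℂ) * I) I y := by
    simpa using ((Complex.ofRealCLM.hasDerivAt (x := y)).mul_const I).const_add (x:ℂ)
  have h1 := (((hasDerivAt_pow n _).comp y h0).const_mul a)
  have h2 := (Complex.reCLM.hasFDerivAt.comp_hasDerivAt y h1)
  simpa [Function.comp_def, Complex.reCLM_apply, mul_comm, mul_assoc, mul_left_comm] using h2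

open Complex in
private lemma stmt6_D1 (c : ℝ) (a : ℂ) (n : ℕ) (y x : ℝ) :
    HasDerivAt (fun s : ℝ => c * (a * ((s:ℂ) + (y:ℂ) * I) ^ n).re)
      (c * ((a * ((n:ℂ) * ((x:ℂ) + (y:ℂ) * I) ^ (n-1))).re)) x := by
  simpa [mul_comm] using (stmt6_Lx a n y x).const_mul c

open Complex in
private lemma stmt6_D2 (c : ℝ) (a : ℂ) (n : ℕ) (x y : ℝ) :
    HasDerivAt (fun t : ℝ => c * (a * ((x:ℂ) + (t:ℂ) * I) ^ n).re)
      (c * ((a * ((n:ℂ) * ((x:ℂ) + (y:ℂ) * I) ^ (n-1)) * I).re)) y := by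
  simpa [mul_comm] using (stmt6_Ly a n x y).const_mul c

open Complex in
private lemma stmt6_key (m : ℕ) (hm : 2 ≤ m) (c : ℝ) (x y : ℝ) :
    (deriv (fun s => deriv (fun s' : ℝ => c * ((((s':ℝ):ℂ) + (y:ℂ) * I) ^ m).re) s) x *
        deriv (fun t => deriv (fun t' : ℝ => c * (((x:ℂ) + ((t':ℝ):ℂ) * I) ^ m).re) t) y -
      deriv (fun t => deriv (fun s : ℝ => c * ((((s:ℝ):ℂ) + ((t:ℝ):ℂ) * I) ^ m).re) x) y ^ 2) /
      (1 + deriv (fun s : ℝ => c * ((((s:ℝ):ℂ) + (y:ℂ) * I) ^ m).re) x ^ 2 +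
        deriv (fun t : ℝ => c * (((x:ℂ) + ((t:ℝ):ℂ) * I) ^ m).re) y ^ 2) ^ 2 =
    -(c ^ 2 * (m : ℝ) ^ 2 * ((m : ℝ) - 1) ^ 2 * (x ^ 2 + y ^ 2) ^ (m - 2)) /
      (1 + c ^ 2 * (m : ℝ) ^ 2 * (x ^ 2 + y ^ 2) ^ (m - 1)) ^ 2 := by
  set Z : ℂ := (x:ℂ) + (y:ℂ) * I with hZ
  -- first derivatives
  have hFx : deriv (fun s : ℝ => c * ((((s:ℝ):ℂ) + (y:ℂ) * I) ^ m).re) x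
      = c * (((m:ℂ) * Z ^ (m-1)).re) := by
    have := (stmt6_D1 c 1 m y x).deriv
    simpa using this
  have hFy : deriv (fun t : ℝ => c * (((x:ℂ) + ((t:ℝ):ℂ) * I) ^ m).re) y
      = c * (((m:ℂ) * Z ^ (m-1) * I).re) := by
    have := (stmt6_D2 c 1 m x y).deriv
    simpa using this
  -- second derivatives
  have hFxx : deriv (fun s => deriv (fun s' : ℝ => c * ((((s':ℝ):ℂ) + (y:ℂ) * I) ^ m).re) s) x
      = c * ((((m:ℂ)) * (((m-1:ℕ):ℂ) * Z ^ (m-2))).re) := by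
    have e : (fun s => deriv (fun s' : ℝ => c * ((((s':ℝ):ℂ) + (y:ℂ) * I) ^ m).re) s)
        = fun s : ℝ => c * (((m:ℂ) * ((s:ℂ) + (y:ℂ) * I) ^ (m-1)).re) := by
      funext s
      have := (stmt6_D1 c 1 m y s).deriv
      simpa using this
    rw [e]
    have := (stmt6_D1 c ((m:ℂ)) (m-1) y x).deriv
    have h2 : m - 1 - 1 = m - 2 := by omega
    rw [h2] at this
    simpa [mul_assoc] using this
  have hFxy : deriv (fun t => deriv (fun s : ℝ => c * ((((s:ℝ):ℂ) + ((t:ℝ):ℂ) * I) ^ m).re) x) y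
      = c * ((((m:ℂ)) * (((m-1:ℕ):ℂ) * Z ^ (m-2)) * I).re) := by
    have e : (fun t => deriv (fun s : ℝ => c * ((((s:ℝ):ℂ) + ((t:ℝ):ℂ) * I) ^ m).re) x)
        = fun t : ℝ => c * (((m:ℂ) * ((x:ℂ) + (t:ℂ) * I) ^ (m-1)).re) := by
      funext t
      have := (stmt6_D1 c 1 m t x).deriv
      simpa using this
    rw [e]
    have := (stmt6_D2 c ((m:ℂ)) (m-1) x y).deriv
    have h2 : m - 1 - 1 = m - 2 := by omega
    rw [h2] at this
    simpa [mul_assoc] using this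
  have hFyy : deriv (fun t => deriv (fun t' : ℝ => c * (((x:ℂ) + ((t':ℝ):ℂ) * I) ^ m).re) t) y
      = c * ((((m:ℂ) * I) * (((m-1:ℕ):ℂ) * Z ^ (m-2)) * I).re) := by
    have e : (fun t => deriv (fun t' : ℝ => c * (((x:ℂ) + ((t':ℝ):ℂ) * I) ^ m).re) t)
        = fun t : ℝ => c * ((((m:ℂ) * I) * ((x:ℂ) + (t:ℂ) * I) ^ (m-1)).re) := by
      funext t
      have := (stmt6_D2 c 1 m x t).deriv
      simp only [one_mul] at this
      rw [this]
      ring_nf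
    rw [e]
    have := (stmt6_D2 c ((m:ℂ) * I) (m-1) x y).deriv
    have h2 : m - 1 - 1 = m - 2 := by omega
    rw [h2] at this
    simpa [mul_assoc] using this
  rw [hFx, hFy, hFxx, hFxy, hFyy]
  -- reduce Re/Im
  have hZsq : Complex.normSq Z = x ^ 2 + y ^ 2 := by
    simpa [hZ] using Complex.normSq_add_mul_I x y
  have hA : (Z ^ (m-2)).re ^ 2 + (Z ^ (m-2)).im ^ 2 = (x ^ 2 + y ^ 2) ^ (m - 2) := by
    have := map_pow Complex.normSq Z (m-2)
    rw [hZsq] at this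
    rw [← this]
    simp [Complex.normSq_apply]
    ring
  have hB : (Z ^ (m-1)).re ^ 2 + (Z ^ (m-1)).im ^ 2 = (x ^ 2 + y ^ 2) ^ (m - 1) := by
    have := map_pow Complex.normSq Z (m-1)
    rw [hZsq] at this
    rw [← this]
    simp [Complex.normSq_apply]
    ring
  have hN : ((m-1:ℕ):ℝ) = (m:ℝ) - 1 := by
    push_cast [Nat.cast_sub (by omega : 1 ≤ m)]
    ring
  rw [← hA, ← hB]
  simp only [Complex.mul_re, Complex.mul_im, Complex.I_re, Complex.I_im,
    Complex.natCast_re, Complex.natCast_im, hN]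
  ring

theorem stmt_6 (m : ℕ) (hm : 2 ≤ m) (c : ℝ) (hc : c ≠ 0) :
    let F : ℝ → ℝ → ℝ := fun x y => c * (((x : ℂ) + (y : ℂ) * Complex.I) ^ m).re
    let K : ℝ → ℝ → ℝ := fun x y =>
      let Fx := deriv (fun s => F s y) x
      let Fy := deriv (fun t => F x t) y
      let Fxx := deriv (fun s => deriv (fun s' => F s' y) s) x
      let Fxy := deriv (fun t => deriv (fun s => F s t) x) y
      let Fyy := deriv (fun t => deriv (fun t' => F x t') t) y
      (Fxx * Fyy - Fxy ^ 2) / (1 + Fx ^ 2 + Fy ^ 2) ^ 2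
    (∀ x y : ℝ,
      K x y = -(c ^ 2 * (m : ℝ) ^ 2 * ((m : ℝ) - 1) ^ 2 * (x ^ 2 + y ^ 2) ^ (m - 2)) /
        (1 + c ^ 2 * (m : ℝ) ^ 2 * (x ^ 2 + y ^ 2) ^ (m - 1)) ^ 2) ∧
    (∀ x y x' y' : ℝ, x ^ 2 + y ^ 2 = x' ^ 2 + y' ^ 2 → K x y = K x' y') := by
  intro F K
  have hK : ∀ x y : ℝ,
      K x y = -(c ^ 2 * (m : ℝ) ^ 2 * ((m : ℝ) - 1) ^ 2 * (x ^ 2 + y ^ 2) ^ (m - 2)) /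
        (1 + c ^ 2 * (m : ℝ) ^ 2 * (x ^ 2 + y ^ 2) ^ (m - 1)) ^ 2 := by
    intro x y
    exact stmt6_key m hm c x y
  refine ⟨hK, fun x y x' y' h => ?_⟩
  rw [hK x y, hK x' y', h]

end
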